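/- Let C₁, C₂ ⊆ ℝ be closed sets with empty interior. Then the limiting normal cone to the product set C₁ × C₂ ⊆ ℝ² at every point of C₁ × C₂ is all of ℝ². -/

import Mathlib

open Filter

noncomputable abbrev E2 := EuclideanSpace ℝ (Fin 2)

/-- Proximal normal to a closed set in the Euclidean plane. -/
def ProxNormal2 (C : Set E2) (x v : E2) : Prop :=
  ∃ y, y ∉ C ∧ (∀ c ∈ C, dist y x ≤ dist y c) ∧ ∃ l : ℝ, 0 ≤ l ∧ v = l • (y - x)

/-- Limiting normal cone membership (limits of proximal normals). -/
def LimNormal2 (C : Set E2) (x v : E2) : Prop :=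
  ∃ xs vs : ℕ → E2, (∀ k, xs k ∈ C) ∧ (∀ k, ProxNormal2 C (xs k) (vs k)) ∧
    Tendsto xs atTop (nhds x) ∧ Tendsto vs atTop (nhds v)


lemma one_dim_pos (C : Set ℝ) (hC : IsClosed C) (hInt : interior C = ∅)
    (x : ℝ) (hx : x ∈ C) (ε : ℝ) (hε : 0 < ε) :
    ∃ c S : ℝ, c ∈ C ∧ |c - x| ≤ ε ∧ 0 < S ∧
      ∀ s : ℝ, 0 < s → s ≤ S →
        (c + s ∉ C ∧ ∀ c' ∈ C, |c + s - c| ≤ |c + s - c'|) := by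
  have hne : ¬ (Set.Ioo x (x + ε) ⊆ C) := by
    intro h
    have h2 : Set.Ioo x (x + ε) ⊆ interior C := interior_maximal h isOpen_Ioo
    rw [hInt] at h2
    exact (Set.nonempty_Ioo.2 (by linarith)).ne_empty (Set.subset_empty_iff.1 h2)
  obtain ⟨u, hu, huC⟩ := Set.not_subset.1 hne
  set A := C ∩ Set.Icc x u with hA
  have hAne : A.Nonempty := ⟨x, hx, le_refl x, hu.1.le⟩
  have hAc : IsClosed A := hC.inter isClosed_Icc
  have hAb : BddAbove A := ⟨u, fun a ha => ha.2.2⟩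
  set c := sSup A with hc
  have hcA : c ∈ A := hAc.csSup_mem hAne hAb
  have hcx : x ≤ c := le_csSup hAb ⟨hx, le_refl x, hu.1.le⟩
  have hcu : c < u := lt_of_le_of_ne hcA.2.2 (fun h => huC (h ▸ hcA.1))
  refine ⟨c, (u - c) / 2, hcA.1, ?_, by linarith, ?_⟩
  · rw [abs_of_nonneg (by linarith)]
    have := hu.2; have := hcA.2.2; linarith
  · intro s hs1 hs2
    have hyu : c + s < u := by linarith
    constructor
    · intro hmem
      have : c + s ∈ A := ⟨hmem, by linarith, by linarith⟩
      have := le_csSup hAb this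
      linarith
    · intro c' hc'
      rcases le_or_gt c' c with h | h
      · rw [abs_of_pos (by linarith : (0:ℝ) < c + s - c)]
        rw [abs_of_pos (by linarith : (0:ℝ) < c + s - c')]
        linarith
      · have huc' : u < c' := by
          rcases lt_or_ge u c' with h2 | h2
          · exact h2
          · have : c' ∈ A := ⟨hc', by linarith, h2⟩
            have := le_csSup hAb this
            linarith
        rw [abs_of_pos (by linarith : (0:ℝ) < c + s - c)]
        rw [abs_of_neg (by linarith : c + s - c' < 0)]
        linarith

lemma one_dim (C : Set ℝ) (hC : IsClosed C) (hInt : interior C = ∅)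
    (x : ℝ) (hx : x ∈ C) (σ : ℝ) (hσ : σ = 1 ∨ σ = -1) (ε : ℝ) (hε : 0 < ε) :
    ∃ c S : ℝ, c ∈ C ∧ |c - x| ≤ ε ∧ 0 < S ∧
      ∀ s : ℝ, 0 < s → s ≤ S →
        (c + σ * s ∉ C ∧ ∀ c' ∈ C, |c + σ * s - c| ≤ |c + σ * s - c'|) := by
  rcases hσ with h | h
  · subst h
    simpa only [one_mul] using one_dim_pos C hC hInt x hx ε hε
  · subst h
    have hC' : IsClosed (Neg.neg ⁻¹' C : Set ℝ) := hC.preimage continuous_neg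
    have hInt' : interior (Neg.neg ⁻¹' C : Set ℝ) = ∅ := by
      have he : (Neg.neg ⁻¹' C : Set ℝ) = -C := rfl
      have h := ((Homeomorph.neg ℝ).preimage_interior C).symm
      rw [hInt] at h
      simp only [Set.preimage_empty] at h
      have he2 : (-C : Set ℝ) = ⇑(Homeomorph.neg ℝ) ⁻¹' C := by ext t; simp [Set.mem_neg]
      rw [he, he2, h]
    obtain ⟨c, S, hcC, hcx, hS, hgood⟩ :=
      one_dim_pos (Neg.neg ⁻¹' C) hC' hInt' (-x) (by simpa using hx) ε hε
    refine ⟨-c, S, by simpa using hcC, ?_, hS, ?_⟩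
    · rw [show -c - x = -(c - -x) by ring, abs_neg]; exact hcx
    · intro s hs1 hs2
      obtain ⟨hnot, hnear⟩ := hgood s hs1 hs2
      constructor
      · intro hmem
        exact hnot (by simpa using (show -(c + s) ∈ C by rw [show -(c+s) = -c + -1 * s by ring]; exact hmem))
      · intro c' hc'
        have h := hnear (-c') (by simpa using hc')
        rw [show -c + -1 * s - -c = -(c + s - c) by ring, abs_neg,
            show -c + -1 * s - c' = -(c + s - -c') by ring, abs_neg]
        exact h

lemma tendsto_E2 (f : ℕ → E2) (x : E2)
    (h : ∀ i, Tendsto (fun k => f k i) atTop (nhds (x i))) :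
    Tendsto f atTop (nhds x) := by
  have h2 : Tendsto (fun k => (EuclideanSpace.equiv (Fin 2) ℝ) (f k)) atTop
      (nhds ((EuclideanSpace.equiv (Fin 2) ℝ) x)) := tendsto_pi_nhds.2 h
  have h3 := ((EuclideanSpace.equiv (Fin 2) ℝ).symm.continuous.tendsto _).comp h2
  exact h3

lemma dist_mono2 (y a b : E2) (h : ∀ i, |y i - a i| ≤ |y i - b i|) : dist y a ≤ dist y b := by
  rw [EuclideanSpace.dist_eq, EuclideanSpace.dist_eq]
  apply Real.sqrt_le_sqrt
  apply Finset.sum_le_sum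
  intro i _
  rw [Real.dist_eq, Real.dist_eq]
  exact pow_le_pow_left₀ (abs_nonneg _) (h i) 2

theorem main_aux (Cf : Fin 2 → Set ℝ) (hC : ∀ i, IsClosed (Cf i))
    (hInt : ∀ i, interior (Cf i) = ∅)
    (x : E2) (hx : ∀ i, x i ∈ Cf i) (v : E2) :
    LimNormal2 {z : E2 | ∀ i, z i ∈ Cf i} x v := by
  set σ : Fin 2 → ℝ := fun i => if 0 ≤ v i then 1 else -1 with hσdef
  have hσ : ∀ i, σ i = 1 ∨ σ i = -1 := fun i => by
    by_cases h : 0 ≤ v i <;> simp [hσdef, h]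
  have hσv : ∀ i, σ i * |v i| = v i := by
    intro i
    by_cases h : 0 ≤ v i
    · simp [hσdef, h, abs_of_nonneg h]
    · push_neg at h
      simp [hσdef, not_le.2 h, abs_of_neg h]
  set δ : ℕ → ℝ := fun k => 1 / (k + 1) with hδdef
  have hδpos : ∀ k, 0 < δ k := fun k => by positivity
  have hδ1 : ∀ k, δ k ≤ 1 := by
    intro k
    rw [hδdef]
    rw [div_le_one (by positivity)]
    linarith [Nat.cast_nonneg (α := ℝ) k]
  have key : ∀ k : ℕ, ∃ a : E2, (∀ i, a i ∈ Cf i) ∧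
      ProxNormal2 {z : E2 | ∀ i, z i ∈ Cf i} a (WithLp.toLp 2 (fun i => v i + σ i * δ k)) ∧
      ∀ i, |a i - x i| ≤ δ k := by
    intro k
    choose c S hcmem hcx hS hgood using fun i : Fin 2 =>
      one_dim (Cf i) (hC i) (hInt i) (x i) (hx i) (σ i) (hσ i) (δ k) (hδpos k)
    set m : ℝ := min (S 0 / (|v 0| + 1)) (S 1 / (|v 1| + 1)) with hm
    have hmpos : 0 < m :=
      lt_min (div_pos (hS 0) (by positivity)) (div_pos (hS 1) (by positivity))
    have hmle : ∀ i, m ≤ S i / (|v i| + 1) := by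
      intro i
      fin_cases i
      · exact min_le_left _ _
      · exact min_le_right _ _
    set s : Fin 2 → ℝ := fun i => m * (|v i| + δ k) with hsdef
    have hspos : ∀ i, 0 < s i :=
      fun i => mul_pos hmpos (add_pos_of_nonneg_of_pos (abs_nonneg _) (hδpos k))
    have hsle : ∀ i, s i ≤ S i := by
      intro i
      have h1 : |v i| + δ k ≤ |v i| + 1 := by linarith [hδ1 k]
      calc s i = m * (|v i| + δ k) := rfl
        _ ≤ (S i / (|v i| + 1)) * (|v i| + 1) := by
            apply mul_le_mul (hmle i) h1 (by positivity) ?_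
            have := (hS i).le
            positivity
        _ = S i := div_mul_cancel₀ _ (by positivity)
    refine ⟨(WithLp.toLp 2 (fun i => c i) : E2), fun i => hcmem i, ?_, ?_⟩
    · refine ⟨(WithLp.toLp 2 (fun i => c i + σ i * s i) : E2), ?_, ?_, 1/m, (one_div_pos.2 hmpos).le, ?_⟩
      · intro hmem
        exact (hgood 0 (s 0) (hspos 0) (hsle 0)).1 (hmem 0)
      · intro z hz
        apply dist_mono2
        intro i
        exact (hgood i (s i) (hspos i) (hsle i)).2 (z i) (hz i)
      · ext i
        show v i + σ i * δ k = (1/m) * ((c i + σ i * s i) - c i)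
        have hsi : s i = m * (|v i| + δ k) := rfl
        rw [hsi]
        have h2 : (1/m) * ((c i + σ i * (m * (|v i| + δ k))) - c i) = σ i * (|v i| + δ k) := by
          field_simp
          ring
        rw [h2, mul_add, hσv i]
    · intro i
      exact hcx i
  choose xs hxs hprox hclose using key
  refine ⟨xs, fun k => (WithLp.toLp 2 (fun i => v i + σ i * δ k) : E2), hxs, hprox, ?_, ?_⟩
  · apply tendsto_E2
    intro i
    rw [tendsto_iff_dist_tendsto_zero]
    apply squeeze_zero (fun k => dist_nonneg) (fun k => ?_) tendsto_one_div_add_atTop_nhds_zero_nat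
    rw [Real.dist_eq]
    exact hclose k i
  · apply tendsto_E2
    intro i
    have h1 : Tendsto (fun k : ℕ => σ i * δ k) atTop (nhds (σ i * 0)) :=
      tendsto_one_div_add_atTop_nhds_zero_nat.const_mul (σ i)
    have h2 := (tendsto_const_nhds (x := v i) (f := atTop (α := ℕ))).add h1
    simpa using h2

theorem stmt1 (C₁ C₂ : Set ℝ) (hC₁ : IsClosed C₁) (hC₂ : IsClosed C₂)
    (hInt₁ : interior C₁ = ∅) (hInt₂ : interior C₂ = ∅)
    (x : E2) (hx : x 0 ∈ C₁ ∧ x 1 ∈ C₂) (v : E2) :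
    LimNormal2 {z : E2 | z 0 ∈ C₁ ∧ z 1 ∈ C₂} x v := by
  have hset : {z : E2 | z 0 ∈ C₁ ∧ z 1 ∈ C₂} = {z : E2 | ∀ i, z i ∈ (![C₁, C₂]) i} := by
    ext z
    simp [Fin.forall_fin_two]
  rw [hset]
  apply main_aux
  · intro i; fin_cases i <;> simpa
  · intro i; fin_cases i <;> simpa
  · intro i; fin_cases i <;> simp [hx.1, hx.2]
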